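/- Let (r,ρ) ∈ 𝒩𝒞. Then the shift map σ_{r,ρ} on M_{r,ρ} is topologically transitive, i.e., for all non-empty open sets U and V in M_{r,ρ} there is a non-negative integer n such that σ_{r,ρ}^n(U) ∩ V ≠ ∅. -/

import Mathlib

/-- `(r, ρ) ∈ 𝒩𝒞`: `0 < r < 1 < ρ` and `r^k = ρ^ℓ` only for `k = ℓ = 0`. -/
def NC (r ρ : ℝ) : Prop :=
  0 < r ∧ r < 1 ∧ 1 < ρ ∧ ∀ k l : ℤ, r ^ k = ρ ^ l ↔ k = 0 ∧ l = 0

/-- The Mahavier product `M_{r,ρ} ⊆ [0,1]^ℕ`. -/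
def Mset (r ρ : ℝ) : Set (ℕ → ℝ) :=
  {x | (∀ i, x i ∈ Set.Icc (0:ℝ) 1) ∧ ∀ i, x (i + 1) = r * x i ∨ x (i + 1) = ρ * x i}

/-- The shift map `σ_{r,ρ}` on `M_{r,ρ}`. -/
def shiftM (r ρ : ℝ) (x : Mset r ρ) : Mset r ρ :=
  ⟨fun i => x.1 (i + 1), fun i => x.2.1 (i + 1), fun i => x.2.2 (i + 1)⟩


open Finset in
/-- Pigeonhole: a small nonzero element of the `ℕ`-cone `{k*a + l*b}`. -/
lemma small_exists (a b : ℝ) (ha : a < 0) (hb : 0 < b)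
    (hnc : ∀ k l : ℤ, (k:ℝ)*a + l*b = 0 → k = 0 ∧ l = 0)
    (δ : ℝ) (hδ : 0 < δ) :
    ∃ k l : ℕ, ((k:ℝ)*a + l*b ≠ 0) ∧ |(k:ℝ)*a + l*b| < δ := by
  have ha' : (0:ℝ) < -a := by linarith
  set e : ℕ → ℝ := fun l => (l:ℝ)*b + (⌊(l:ℝ)*b/(-a)⌋ : ℝ) * a with he
  have hebd : ∀ l : ℕ, 0 ≤ e l ∧ e l < -a := by
    intro l
    set x : ℝ := (l:ℝ)*b/(-a) with hx
    have h1 : (⌊x⌋ : ℝ) ≤ x := Int.floor_le _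
    have h2 : x < ⌊x⌋ + 1 := Int.lt_floor_add_one _
    have h3 : x * (-a) = (l:ℝ)*b := div_mul_cancel₀ _ (ne_of_gt ha')
    have key : e l = (x - (⌊x⌋:ℝ)) * (-a) := by
      simp only [he]; linear_combination -h3
    constructor
    · rw [key]; exact mul_nonneg (by linarith) ha'.le
    · rw [key]
      calc (x - (⌊x⌋:ℝ)) * (-a) < 1 * (-a) :=
            mul_lt_mul_of_pos_right (by linarith) ha'
        _ = -a := one_mul _
  obtain ⟨M, hM⟩ : ∃ M : ℕ, -a < (M:ℝ) * δ := by
    obtain ⟨M, hM⟩ := exists_nat_gt ((-a)/δ)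
    exact ⟨M, by rw [div_lt_iff₀ hδ] at hM; linarith⟩
  have hM0 : 0 < M := by
    by_contra hM'
    push_neg at hM'
    interval_cases M
    simp at hM
    linarith
  have hpig : ∃ l1 ∈ Finset.range (M+1), ∃ l2 ∈ Finset.range (M+1), l1 ≠ l2 ∧
      (⌊e l1 / δ⌋).toNat = (⌊e l2 / δ⌋).toNat := by
    refine Finset.exists_ne_map_eq_of_card_lt_of_maps_to (s := Finset.range (M+1))
      (t := Finset.range M) (by simp) ?_
    intro l _
    simp only [Finset.mem_range]
    have h1 : e l / δ < M := by
      rw [div_lt_iff₀ hδ]; exact lt_of_lt_of_le (hebd l).2 hM.le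
    have h2 : ⌊e l / δ⌋ < (M:ℤ) := by
      exact_mod_cast lt_of_le_of_lt (Int.floor_le _) h1
    have : (0:ℤ) < M := by exact_mod_cast hM0
    rw [Finset.coe_range, Set.mem_Iio]
    omega
  have main : ∀ l1 l2 : ℕ, l1 < l2 → (⌊e l1 / δ⌋).toNat = (⌊e l2 / δ⌋).toNat →
      ∃ k l : ℕ, ((k:ℝ)*a + l*b ≠ 0) ∧ |(k:ℝ)*a + l*b| < δ := by
    intro l1 l2 hlt htn
    have n1 : 0 ≤ ⌊e l1 / δ⌋ := Int.floor_nonneg.mpr (div_nonneg (hebd l1).1 hδ.le)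
    have n2 : 0 ≤ ⌊e l2 / δ⌋ := Int.floor_nonneg.mpr (div_nonneg (hebd l2).1 hδ.le)
    have hfe : ⌊e l1 / δ⌋ = ⌊e l2 / δ⌋ := by omega
    have hclose : |e l2 - e l1| < δ := by
      have b1 : (⌊e l2 / δ⌋ : ℝ) ≤ e l1 / δ := by rw [← hfe]; exact Int.floor_le _
      have b2 : e l1 / δ < ⌊e l2 / δ⌋ + 1 := by rw [← hfe]; exact Int.lt_floor_add_one _
      have b3 : (⌊e l2 / δ⌋ : ℝ) ≤ e l2 / δ := Int.floor_le _
      have b4 : e l2 / δ < ⌊e l2 / δ⌋ + 1 := Int.lt_floor_add_one _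
      rw [abs_lt]
      constructor
      · have h5 : e l1 / δ - e l2 / δ < 1 := by linarith
        rw [div_sub_div_same] at h5
        have := (div_lt_one hδ).mp h5
        linarith
      · have h5 : e l2 / δ - e l1 / δ < 1 := by linarith
        rw [div_sub_div_same] at h5
        linarith [(div_lt_one hδ).mp h5]
    set f1 := ⌊(l1:ℝ)*b/(-a)⌋ with hf1
    set f2 := ⌊(l2:ℝ)*b/(-a)⌋ with hf2
    have hmono : f1 ≤ f2 := by
      apply Int.floor_le_floor
      have hcast : (l1:ℝ) ≤ (l2:ℝ) := Nat.cast_le.mpr hlt.le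
      gcongr
    refine ⟨(f2 - f1).toNat, l2 - l1, ?_, ?_⟩
    · -- nonzero
      intro h0
      have hk : (((f2 - f1).toNat : ℤ) : ℝ) = (f2:ℝ) - f1 := by
        rw [Int.toNat_of_nonneg (by omega)]; push_cast; ring
      have hl : (((l2 - l1 : ℕ) : ℤ) : ℝ) = (l2:ℝ) - l1 := by
        push_cast [Nat.cast_sub hlt.le]; ring
      have := hnc ((f2 - f1).toNat : ℤ) ((l2 - l1 : ℕ) : ℤ) (by
        rw [hk, hl]
        have hk' : (((f2 - f1).toNat : ℕ) : ℝ) = (f2:ℝ) - f1 := by exact_mod_cast hk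
        have hl' : (((l2 - l1 : ℕ) : ℕ) : ℝ) = (l2:ℝ) - l1 := by exact_mod_cast hl
        rw [← hk', ← hl']; exact h0)
      have h2 := this.2
      omega
    · -- small
      have hk' : (((f2 - f1).toNat : ℕ) : ℝ) = (f2:ℝ) - f1 := by
        have : (((f2 - f1).toNat : ℤ) : ℝ) = (f2:ℝ) - f1 := by
          rw [Int.toNat_of_nonneg (by omega)]; push_cast; ring
        exact_mod_cast this
      have hl' : (((l2 - l1 : ℕ) : ℕ) : ℝ) = (l2:ℝ) - l1 := by
        push_cast [Nat.cast_sub hlt.le]; ring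
      have hval : (((f2 - f1).toNat : ℕ) : ℝ)*a + ((l2 - l1 : ℕ) : ℝ)*b = e l2 - e l1 := by
        rw [hk', hl']; simp only [he, hf1, hf2]; ring
      rw [hval]; exact hclose
  obtain ⟨l1, hl1, l2, hl2, hne, heq⟩ := hpig
  rcases hne.lt_or_gt with h | h
  · exact main l1 l2 h heq
  · exact main l2 l1 h heq.symm

section dens
variable (a b : ℝ)

/-- small positive element of the cone -/
lemma smallPos (ha : a < 0) (hb : 0 < b)
    (hnc : ∀ k l : ℤ, (k:ℝ)*a + l*b = 0 → k = 0 ∧ l = 0)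
    (δ : ℝ) (hδ : 0 < δ) :
    ∃ k l : ℕ, 0 < (k:ℝ)*a + l*b ∧ (k:ℝ)*a + l*b < δ := by
  obtain ⟨k, l, hg0, hgs⟩ := small_exists a b ha hb hnc δ hδ
  set g : ℝ := (k:ℝ)*a + l*b with hg
  rcases lt_or_gt_of_ne hg0 with hneg | hpos
  · -- g < 0 : use b + m * g with m = ⌊b / (-g)⌋
    have hng : 0 < -g := by linarith
    have hgs' : -g < δ := by rwa [abs_of_neg hneg] at hgs
    set m : ℕ := (⌊b / (-g)⌋).toNat with hm
    have hm0 : 0 ≤ ⌊b / (-g)⌋ := Int.floor_nonneg.mpr (div_nonneg hb.le hng.le)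
    have hmc : ((m:ℕ):ℝ) = (⌊b / (-g)⌋ : ℝ) := by
      rw [hm]; exact_mod_cast Int.toNat_of_nonneg hm0
    have h1 : (m:ℝ) ≤ b / (-g) := by rw [hmc]; exact Int.floor_le _
    have h2 : b / (-g) < (m:ℝ) + 1 := by rw [hmc]; exact Int.lt_floor_add_one _
    have e1 : (m:ℝ) * (-g) ≤ b := by
      rw [← div_mul_cancel₀ b (ne_of_gt hng)]
      exact mul_le_mul_of_nonneg_right h1 hng.le
    have e2 : b < ((m:ℝ)+1) * (-g) := by
      rw [← div_mul_cancel₀ b (ne_of_gt hng)]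
      exact mul_lt_mul_of_pos_right h2 hng
    refine ⟨m*k, m*l+1, ?_, ?_⟩
    · -- positivity: value = b + m*g ; nonzero by hnc
      have hval : ((m*k:ℕ):ℝ)*a + ((m*l+1:ℕ):ℝ)*b = b + (m:ℝ)*g := by
        push_cast; rw [hg]; ring
      rw [hval]
      have hne : b + (m:ℝ)*g ≠ 0 := by
        intro h0
        have := hnc ((m*k : ℕ):ℤ) ((m*l+1 : ℕ):ℤ) (by push_cast; push_cast at hval; linarith [hval])
        omega
      have : 0 ≤ b + (m:ℝ)*g := by nlinarith
      rcases this.lt_or_eq with h | h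
      · exact h
      · exact absurd h.symm hne
    · have hval : ((m*k:ℕ):ℝ)*a + ((m*l+1:ℕ):ℝ)*b = b + (m:ℝ)*g := by
        push_cast; rw [hg]; ring
      rw [hval]
      nlinarith
  · exact ⟨k, l, hpos, lt_of_le_of_lt (le_abs_self _) hgs⟩

lemma smallNeg (ha : a < 0) (hb : 0 < b)
    (hnc : ∀ k l : ℤ, (k:ℝ)*a + l*b = 0 → k = 0 ∧ l = 0)
    (δ : ℝ) (hδ : 0 < δ) :
    ∃ k l : ℕ, -δ < (k:ℝ)*a + l*b ∧ (k:ℝ)*a + l*b < 0 := by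
  obtain ⟨k, l, hg0, hgs⟩ := small_exists a b ha hb hnc δ hδ
  set g : ℝ := (k:ℝ)*a + l*b with hg
  rcases lt_or_gt_of_ne hg0 with hneg | hpos
  · exact ⟨k, l, by rw [abs_lt] at hgs; linarith, hneg⟩
  · -- g > 0 : use a + m * g with m = ⌊(-a) / g⌋
    have hgs' : g < δ := by rwa [abs_of_pos hpos] at hgs
    set m : ℕ := (⌊(-a) / g⌋).toNat with hm
    have hm0 : 0 ≤ ⌊(-a) / g⌋ := Int.floor_nonneg.mpr (div_nonneg (by linarith) hpos.le)
    have hmc : ((m:ℕ):ℝ) = (⌊(-a) / g⌋ : ℝ) := by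
      rw [hm]; exact_mod_cast Int.toNat_of_nonneg hm0
    have h1 : (m:ℝ) ≤ (-a) / g := by rw [hmc]; exact Int.floor_le _
    have h2 : (-a) / g < (m:ℝ) + 1 := by rw [hmc]; exact Int.lt_floor_add_one _
    have e1 : (m:ℝ) * g ≤ -a := by
      rw [← div_mul_cancel₀ (-a) (ne_of_gt hpos)]
      exact mul_le_mul_of_nonneg_right h1 hpos.le
    have e2 : -a < ((m:ℝ)+1) * g := by
      rw [← div_mul_cancel₀ (-a) (ne_of_gt hpos)]
      exact mul_lt_mul_of_pos_right h2 hpos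
    refine ⟨m*k+1, m*l, ?_, ?_⟩
    · have hval : ((m*k+1:ℕ):ℝ)*a + ((m*l:ℕ):ℝ)*b = a + (m:ℝ)*g := by
        push_cast; rw [hg]; ring
      rw [hval]
      nlinarith
    · have hval : ((m*k+1:ℕ):ℝ)*a + ((m*l:ℕ):ℝ)*b = a + (m:ℝ)*g := by
        push_cast; rw [hg]; ring
      rw [hval]
      have hne : a + (m:ℝ)*g ≠ 0 := by
        intro h0
        have := hnc ((m*k+1 : ℕ):ℤ) ((m*l : ℕ):ℤ) (by push_cast; push_cast at hval; linarith [hval])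
        omega
      have : a + (m:ℝ)*g ≤ 0 := by nlinarith
      rcases this.lt_or_eq with h | h
      · exact h
      · exact absurd h hne
    
/-- density of the ℕ-cone in ℝ -/
lemma densCone (ha : a < 0) (hb : 0 < b)
    (hnc : ∀ k l : ℤ, (k:ℝ)*a + l*b = 0 → k = 0 ∧ l = 0)
    (u δ : ℝ) (hδ : 0 < δ) :
    ∃ k l : ℕ, |((k:ℝ)*a + l*b) - u| < δ := by
  rcases le_or_gt 0 u with hu | hu
  · obtain ⟨k, l, hg0, hgs⟩ := smallPos a b ha hb hnc δ hδ
    set g : ℝ := (k:ℝ)*a + l*b with hg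
    set m : ℕ := (⌊u / g⌋).toNat with hm
    have hm0 : 0 ≤ ⌊u / g⌋ := Int.floor_nonneg.mpr (div_nonneg hu hg0.le)
    have hmc : ((m:ℕ):ℝ) = (⌊u / g⌋ : ℝ) := by
      rw [hm]; exact_mod_cast Int.toNat_of_nonneg hm0
    have h1 : (m:ℝ) ≤ u / g := by rw [hmc]; exact Int.floor_le _
    have h2 : u / g < (m:ℝ) + 1 := by rw [hmc]; exact Int.lt_floor_add_one _
    have e1 : (m:ℝ) * g ≤ u := by
      rw [← div_mul_cancel₀ u (ne_of_gt hg0)]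
      exact mul_le_mul_of_nonneg_right h1 hg0.le
    have e2 : u < ((m:ℝ)+1) * g := by
      rw [← div_mul_cancel₀ u (ne_of_gt hg0)]
      exact mul_lt_mul_of_pos_right h2 hg0
    refine ⟨m*k, m*l, ?_⟩
    have hval : ((m*k:ℕ):ℝ)*a + ((m*l:ℕ):ℝ)*b = (m:ℝ)*g := by
      push_cast; rw [hg]; ring
    rw [hval, abs_lt]
    constructor <;> nlinarith
  · obtain ⟨k, l, hgs, hg0⟩ := smallNeg a b ha hb hnc δ hδ
    set g : ℝ := (k:ℝ)*a + l*b with hg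
    set m : ℕ := (⌊u / g⌋).toNat with hm
    have hm0 : 0 ≤ ⌊u / g⌋ := Int.floor_nonneg.mpr (div_nonneg_iff.mpr (Or.inr ⟨hu.le, hg0.le⟩))
    have hmc : ((m:ℕ):ℝ) = (⌊u / g⌋ : ℝ) := by
      rw [hm]; exact_mod_cast Int.toNat_of_nonneg hm0
    have h1 : (m:ℝ) ≤ u / g := by rw [hmc]; exact Int.floor_le _
    have h2 : u / g < (m:ℝ) + 1 := by rw [hmc]; exact Int.lt_floor_add_one _
    have e1 : u ≤ (m:ℝ) * g := by
      rw [← div_mul_cancel₀ u (ne_of_lt hg0)]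
      exact mul_le_mul_of_nonpos_right h1 hg0.le
    have e2 : ((m:ℝ)+1) * g < u := by
      rw [← div_mul_cancel₀ u (ne_of_lt hg0)]
      exact mul_lt_mul_of_neg_right h2 hg0
    refine ⟨m*k, m*l, ?_⟩
    have hval : ((m*k:ℕ):ℝ)*a + ((m*l:ℕ):ℝ)*b = (m:ℝ)*g := by
      push_cast; rw [hg]; ring
    rw [hval, abs_lt]
    constructor <;> nlinarith

end dens

section steer
variable {r ρ : ℝ}

private lemma steer_cons (hr0 : 0 < r) (c pr : ℝ) (m' : ℕ → ℝ) (n : ℕ) (v : ℝ)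
    (hc : c = r ∨ c = ρ)
    (h1 : ∀ i, m' i = r ∨ m' i = ρ)
    (h2 : ∀ j ≤ n, (v * c) * ∏ i ∈ Finset.range j, m' i ≤ 1)
    (h3 : ∏ i ∈ Finset.range n, m' i = pr)
    (hv1 : v ≤ 1) :
    ∃ m : ℕ → ℝ, (∀ i, m i = r ∨ m i = ρ) ∧
      (∀ j ≤ n+1, v * ∏ i ∈ Finset.range j, m i ≤ 1) ∧
      ∏ i ∈ Finset.range (n+1), m i = c * pr := by
  refine ⟨fun i => match i with | 0 => c | (j+1) => m' j, ?_, ?_, ?_⟩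
  · intro i; match i with
    | 0 => exact hc
    | (j+1) => exact h1 j
  · intro j hj
    match j with
    | 0 => simpa using hv1
    | (j'+1) =>
      rw [Finset.prod_range_succ']
      have := h2 j' (by omega)
      calc v * ((∏ i ∈ Finset.range j', m' i) * c)
          = (v * c) * ∏ i ∈ Finset.range j', m' i := by ring
        _ ≤ 1 := this
  · rw [Finset.prod_range_succ', h3]; ring

lemma steer (hr0 : 0 < r) (hr1 : r < 1) (hρ1 : 1 < ρ) :
    ∀ (n k l : ℕ), k + l = n → ∀ v : ℝ, 0 < v → v ≤ 1 → v * (r ^ k * ρ ^ l) ≤ 1 →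
    ∃ m : ℕ → ℝ, (∀ i, m i = r ∨ m i = ρ) ∧
      (∀ j ≤ n, v * ∏ i ∈ Finset.range j, m i ≤ 1) ∧
      (∏ i ∈ Finset.range n, m i) = r ^ k * ρ ^ l := by
  intro n
  induction n with
  | zero =>
    intro k l hkl v hv0 hv1 _
    obtain ⟨hk, hl⟩ : k = 0 ∧ l = 0 := by omega
    subst hk; subst hl
    refine ⟨fun _ => r, fun _ => Or.inl rfl, ?_, by simp⟩
    intro j hj
    interval_cases j
    simpa using hv1
  | succ n ih =>
    intro k l hkl v hv0 hv1 hle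
    by_cases hl : l = 0
    · subst hl
      obtain ⟨k', rfl⟩ : ∃ k', k = k' + 1 := ⟨n, by omega⟩
      have hvr1 : v * r ≤ 1 := by nlinarith
      obtain ⟨m', h1, h2, h3⟩ := ih k' 0 (by omega) (v * r) (by positivity) hvr1
        (by rw [pow_zero, mul_one] at hle ⊢; calc (v*r) * r ^ k' = v * r^(k'+1) := by ring
              _ ≤ 1 := hle)
      obtain ⟨m, hm1, hm2, hm3⟩ := steer_cons hr0 r (r ^ k' * ρ ^ 0) m' n v (Or.inl rfl) h1 h2 h3 hv1
      exact ⟨m, hm1, hm2, by rw [hm3]; ring⟩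
    · obtain ⟨l', rfl⟩ : ∃ l', l = l' + 1 := ⟨l - 1, by omega⟩
      by_cases hvρ : v * ρ ≤ 1
      · obtain ⟨m', h1, h2, h3⟩ := ih k l' (by omega) (v * ρ) (by positivity) hvρ
          (by calc (v*ρ) * (r ^ k * ρ ^ l') = v * (r^k * ρ^(l'+1)) := by ring
                _ ≤ 1 := hle)
        obtain ⟨m, hm1, hm2, hm3⟩ := steer_cons hr0 ρ (r ^ k * ρ ^ l') m' n v (Or.inr rfl) h1 h2 h3 hv1
        exact ⟨m, hm1, hm2, by rw [hm3]; ring⟩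
      · push_neg at hvρ
        obtain ⟨k', rfl⟩ : ∃ k', k = k' + 1 := by
          rcases Nat.eq_zero_or_pos k with hk0 | hk0
          · exfalso
            subst hk0
            rw [pow_zero, one_mul] at hle
            have h1 : (1:ℝ) ≤ ρ ^ l' := one_le_pow₀ hρ1.le
            have h2 : v * ρ ^ (l'+1) = (v*ρ) * ρ^l' := by ring
            nlinarith
          · exact ⟨k - 1, by omega⟩
        have hvr1 : v * r ≤ 1 := by nlinarith
        obtain ⟨m', h1, h2, h3⟩ := ih k' (l'+1) (by omega) (v * r) (by positivity) hvr1
          (by calc (v*r) * (r ^ k' * ρ ^ (l'+1)) = v * (r^(k'+1) * ρ^(l'+1)) := by ring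
                _ ≤ 1 := hle)
        obtain ⟨m, hm1, hm2, hm3⟩ := steer_cons hr0 r (r ^ k' * ρ ^ (l'+1)) m' n v (Or.inl rfl) h1 h2 h3 hv1
        exact ⟨m, hm1, hm2, by rw [hm3]; ring⟩

end steer

/-- basic cylinder inside an open set of the product -/
lemma cylinder {S : Set (ℕ → ℝ)} (hS : IsOpen S) {x : ℕ → ℝ} (hx : x ∈ S) :
    ∃ N : ℕ, ∃ ε : ℝ, 0 < ε ∧ ∀ g : ℕ → ℝ, (∀ i ≤ N, |g i - x i| < ε) → g ∈ S := by
  obtain ⟨I, u, hu, hsub⟩ := isOpen_pi_iff.mp hS x hx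
  have hball : ∀ a ∈ I, ∃ e : ℝ, 0 < e ∧ Metric.ball (x a) e ⊆ u a := by
    intro a ha
    obtain ⟨e, he, hb⟩ := Metric.isOpen_iff.mp (hu a ha).1 (x a) (hu a ha).2
    exact ⟨e, he, hb⟩
  choose! e he hb using hball
  rcases I.eq_empty_or_nonempty with hI | hI
  · refine ⟨0, 1, one_pos, fun g _ => hsub ?_⟩
    subst hI
    simp [Set.pi]
  · refine ⟨I.sup id, I.inf' hI e, ?_, ?_⟩
    · rw [Finset.lt_inf'_iff]
      exact fun a ha => he a ha
    · intro g hg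
      apply hsub
      intro a ha
      apply hb a ha
      rw [Metric.mem_ball, Real.dist_eq]
      exact lt_of_lt_of_le (hg a (Finset.le_sup (f := id) ha)) (Finset.inf'_le _ ha)

section main
variable {r ρ : ℝ}

lemma log_nc (h : NC r ρ) :
    ∀ k l : ℤ, (k:ℝ) * Real.log r + (l:ℝ) * Real.log ρ = 0 → k = 0 ∧ l = 0 := by
  obtain ⟨hr0, hr1, hρ1, hnc⟩ := h
  intro k l hkl
  have hρ0 : (0:ℝ) < ρ := by linarith
  have h1 : Real.log (r ^ k) = Real.log (ρ ^ (-l)) := by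
    rw [Real.log_zpow, Real.log_zpow]
    push_cast
    linarith
  have h2 : r ^ k = ρ ^ (-l) := by
    have p1 : (0:ℝ) < r ^ k := zpow_pos hr0 k
    have p2 : (0:ℝ) < ρ ^ (-l) := zpow_pos hρ0 (-l)
    exact Real.log_injOn_pos (Set.mem_Ioi.mpr p1) (Set.mem_Ioi.mpr p2) h1
  have := (hnc k (-l)).mp h2
  omega

lemma phase1 (hr0 : 0 < r) (hr1 : r < 1) (hρ1 : 1 < ρ) (xf : ℕ → ℝ)
    (hmem : ∀ i, xf i ∈ Set.Icc (0:ℝ) 1)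
    (hstep : ∀ i, xf (i+1) = r * xf i ∨ xf (i+1) = ρ * xf i)
    (δ : ℝ) (hδ0 : 0 < δ) (hδ1 : δ ≤ 1) :
    ∃ (z₀ : ℝ) (m1 : ℕ → ℝ), (∀ i, m1 i = r ∨ m1 i = ρ) ∧
      ∀ i, 0 < z₀ * ∏ j ∈ Finset.range i, m1 j ∧
           z₀ * ∏ j ∈ Finset.range i, m1 j ≤ 1 ∧
           |z₀ * ∏ j ∈ Finset.range i, m1 j - xf i| ≤ δ := by
  have hprodpos : ∀ (m1 : ℕ → ℝ), (∀ i, m1 i = r ∨ m1 i = ρ) →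
      ∀ i, 0 < ∏ j ∈ Finset.range i, m1 j := by
    intro m1 hm1 i
    apply Finset.prod_pos
    intro j _
    rcases hm1 j with h | h <;> rw [h] <;> linarith
  rcases eq_or_lt_of_le (hmem 0).1 with h0 | h0
  · -- xf 0 = 0, hence xf ≡ 0
    have hall : ∀ i, xf i = 0 := by
      intro i
      induction i with
      | zero => exact h0.symm
      | succ i ih => rcases hstep i with h | h <;> rw [h, ih, mul_zero]
    refine ⟨δ, fun _ => r, fun _ => Or.inl rfl, fun i => ?_⟩
    rw [Finset.prod_const, Finset.card_range]
    have hrp : (0:ℝ) < r ^ i := pow_pos hr0 i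
    have hr1' : r ^ i ≤ 1 := pow_le_one₀ hr0.le hr1.le
    refine ⟨by positivity, by nlinarith, ?_⟩
    rw [hall i, sub_zero, abs_of_pos (by positivity)]
    nlinarith
  · -- xf 0 > 0
    set m1 : ℕ → ℝ := fun i => if xf (i+1) = r * xf i then r else ρ with hm1def
    have hm1 : ∀ i, m1 i = r ∨ m1 i = ρ := by
      intro i
      simp only [hm1def]
      split_ifs
      · exact Or.inl rfl
      · exact Or.inr rfl
    have hrep : ∀ i, xf 0 * ∏ j ∈ Finset.range i, m1 j = xf i := by
      intro i
      induction i with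
      | zero => simp
      | succ i ih =>
        rw [Finset.prod_range_succ, ← mul_assoc, ih]
        simp only [hm1def]
        split_ifs with hc
        · rw [hc]; ring
        · rcases hstep i with hs | hs
          · exact absurd hs hc
          · rw [hs]; ring
    refine ⟨xf 0, m1, hm1, fun i => ?_⟩
    have hpos := hprodpos m1 hm1 i
    refine ⟨by positivity, ?_, ?_⟩
    · rw [hrep i]; exact (hmem i).2
    · rw [hrep i, sub_self, abs_zero]; exact hδ0.le

lemma phase3 (hr0 : 0 < r) (hr1 : r < 1) (hρ1 : 1 < ρ) (yf : ℕ → ℝ)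
    (hmem : ∀ i, yf i ∈ Set.Icc (0:ℝ) 1)
    (hstep : ∀ i, yf (i+1) = r * yf i ∨ yf (i+1) = ρ * yf i)
    (δ : ℝ) (hδ0 : 0 < δ) (hδ1 : δ ≤ 1/2) :
    ∃ (w : ℝ) (m3 : ℕ → ℝ), (∀ i, m3 i = r ∨ m3 i = ρ) ∧ 0 < w ∧ w ≤ 1 ∧
      ∀ vr : ℝ, (1-δ)*w ≤ vr → vr ≤ w →
        ∀ d, 0 < vr * ∏ j ∈ Finset.range d, m3 j ∧
             vr * ∏ j ∈ Finset.range d, m3 j ≤ 1 ∧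
             |vr * ∏ j ∈ Finset.range d, m3 j - yf d| ≤ δ := by
  have hprodpos : ∀ (m3 : ℕ → ℝ), (∀ i, m3 i = r ∨ m3 i = ρ) →
      ∀ i, 0 < ∏ j ∈ Finset.range i, m3 j := by
    intro m3 hm3 i
    apply Finset.prod_pos
    intro j _
    rcases hm3 j with h | h <;> rw [h] <;> linarith
  rcases eq_or_lt_of_le (hmem 0).1 with h0 | h0
  · -- yf 0 = 0, hence yf ≡ 0
    have hall : ∀ i, yf i = 0 := by
      intro i
      induction i with
      | zero => exact h0.symm
      | succ i ih => rcases hstep i with h | h <;> rw [h, ih, mul_zero]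
    refine ⟨δ, fun _ => r, fun _ => Or.inl rfl, hδ0, by linarith, ?_⟩
    intro vr hvr1 hvr2 d
    rw [Finset.prod_const, Finset.card_range]
    have hrp : (0:ℝ) < r ^ d := pow_pos hr0 d
    have hr1' : r ^ d ≤ 1 := pow_le_one₀ hr0.le hr1.le
    have hvr0 : 0 < vr := by nlinarith
    refine ⟨by positivity, by nlinarith, ?_⟩
    rw [hall d, sub_zero, abs_of_pos (by positivity)]
    nlinarith
  · -- yf 0 > 0
    set m3 : ℕ → ℝ := fun i => if yf (i+1) = r * yf i then r else ρ with hm3def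
    have hm3 : ∀ i, m3 i = r ∨ m3 i = ρ := by
      intro i
      simp only [hm3def]
      split_ifs
      · exact Or.inl rfl
      · exact Or.inr rfl
    have hrep : ∀ i, yf 0 * ∏ j ∈ Finset.range i, m3 j = yf i := by
      intro i
      induction i with
      | zero => simp
      | succ i ih =>
        rw [Finset.prod_range_succ, ← mul_assoc, ih]
        simp only [hm3def]
        split_ifs with hc
        · rw [hc]; ring
        · rcases hstep i with hs | hs
          · exact absurd hs hc
          · rw [hs]; ring
    refine ⟨yf 0, m3, hm3, h0, (hmem 0).2, ?_⟩
    intro vr hvr1 hvr2 d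
    have hpos := hprodpos m3 hm3 d
    have hvr0 : 0 < vr := by nlinarith
    have hyd : yf d = yf 0 * ∏ j ∈ Finset.range d, m3 j := (hrep d).symm
    have hyd1 : yf d ≤ 1 := (hmem d).2
    refine ⟨by positivity, ?_, ?_⟩
    · calc vr * ∏ j ∈ Finset.range d, m3 j
          ≤ yf 0 * ∏ j ∈ Finset.range d, m3 j := by
            apply mul_le_mul_of_nonneg_right hvr2 hpos.le
        _ = yf d := hrep d
        _ ≤ 1 := hyd1
    · rw [abs_le]
      constructor
      · -- -δ ≤ vr * Q - yf d
        have : (1-δ) * yf d ≤ vr * ∏ j ∈ Finset.range d, m3 j := by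
          rw [hyd]
          calc (1-δ) * (yf 0 * ∏ j ∈ Finset.range d, m3 j)
              = ((1-δ) * yf 0) * ∏ j ∈ Finset.range d, m3 j := by ring
            _ ≤ vr * ∏ j ∈ Finset.range d, m3 j :=
                mul_le_mul_of_nonneg_right hvr1 hpos.le
        have hyd0 : 0 ≤ yf d := (hmem d).1
        nlinarith
      · have : vr * ∏ j ∈ Finset.range d, m3 j ≤ yf d := by
          rw [hyd]; exact mul_le_mul_of_nonneg_right hvr2 hpos.le
        nlinarith [hδ0]

lemma approx (h : NC r ρ) (xf yf : ℕ → ℝ) (hx : xf ∈ Mset r ρ) (hy : yf ∈ Mset r ρ)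
    (N : ℕ) (ε : ℝ) (hε : 0 < ε) :
    ∃ (z : ℕ → ℝ) (n : ℕ), z ∈ Mset r ρ ∧ (∀ i ≤ N, |z i - xf i| < ε) ∧
      (∀ i, |z (i + n) - yf i| < ε) := by
  have hr0 := h.1
  have hr1 := h.2.1
  have hρ1 := h.2.2.1
  have hρ0 : (0:ℝ) < ρ := by linarith
  set δ : ℝ := min (ε/2) (1/2) with hδdef
  have hδ0 : 0 < δ := by positivity
  have hδε : δ < ε := lt_of_le_of_lt (min_le_left _ _) (by linarith)
  have hδ1 : δ ≤ 1/2 := min_le_right _ _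
  obtain ⟨z₀, m1, hm1, hP⟩ := phase1 hr0 hr1 hρ1 xf hx.1 hx.2 δ hδ0 (by linarith)
  obtain ⟨w, m3, hm3, hw0, hw1, hkey⟩ := phase3 hr0 hr1 hρ1 yf hy.1 hy.2 δ hδ0 hδ1
  set v : ℝ := z₀ * ∏ j ∈ Finset.range N, m1 j with hvdef
  have hv0 : 0 < v := (hP N).1
  have hv1 : v ≤ 1 := (hP N).2.1
  -- choose k, l with v * r^k * ρ^l ∈ ((1-δ)w, w)
  set a : ℝ := Real.log r with hadef
  set b : ℝ := Real.log ρ with hbdef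
  have ha : a < 0 := Real.log_neg hr0 hr1
  have hb : 0 < b := Real.log_pos hρ1
  have h1δ : (0:ℝ) < 1 - δ := by linarith
  have hlogneg : Real.log (1-δ) < 0 := Real.log_neg h1δ (by linarith)
  obtain ⟨k, l, hkl⟩ := densCone a b ha hb (log_nc h)
      (Real.log (w/v) + Real.log (1-δ)/2) (-Real.log (1-δ)/2) (by linarith)
  set g : ℝ := (k:ℝ)*a + l*b with hgdef
  have hexp : r ^ k * ρ ^ l = Real.exp g := by
    rw [hgdef, Real.exp_add, hadef, hbdef]
    rw [mul_comm (k:ℝ) _, mul_comm (l:ℝ) _, Real.exp_mul, Real.exp_mul]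
    rw [Real.exp_log hr0, Real.exp_log hρ0]
    norm_num
  set vr : ℝ := v * (r ^ k * ρ ^ l) with hvrdef
  have hgbounds : Real.log (w/v) + Real.log (1-δ) < g ∧ g < Real.log (w/v) := by
    rw [abs_lt] at hkl
    constructor <;> linarith [hkl.1, hkl.2]
  have hwv : Real.exp (Real.log (w/v)) = w/v := Real.exp_log (by positivity)
  have hvr_lt : vr < w := by
    rw [hvrdef, hexp]
    have := Real.exp_lt_exp.mpr hgbounds.2
    rw [hwv] at this
    calc v * Real.exp g < v * (w/v) := by exact mul_lt_mul_of_pos_left this hv0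
      _ = w := by field_simp
  have hvr_gt : (1-δ)*w < vr := by
    rw [hvrdef, hexp]
    have := Real.exp_lt_exp.mpr hgbounds.1
    rw [Real.exp_add, hwv, Real.exp_log h1δ] at this
    calc (1-δ)*w = v * (w/v * (1-δ)) := by field_simp
      _ < v * Real.exp g := by exact mul_lt_mul_of_pos_left this hv0
  have hvr0 : 0 < vr := by nlinarith
  have hvr1 : vr ≤ 1 := by linarith
  obtain ⟨ms, hms1, hms2, hms3⟩ := steer hr0 hr1 hρ1 (k+l) k l rfl v hv0 hv1 (by
    rw [← hvrdef]; exact hvr1)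
  set K : ℕ := k + l with hKdef
  set n : ℕ := N + K with hndef
  set m : ℕ → ℝ := fun i => if i < N then m1 i else if i < n then ms (i - N) else m3 (i - n)
    with hmdef
  set z : ℕ → ℝ := fun i => z₀ * ∏ j ∈ Finset.range i, m j with hzdef
  have hmrρ : ∀ i, m i = r ∨ m i = ρ := by
    intro i
    simp only [hmdef]
    split_ifs
    · exact hm1 i
    · exact hms1 (i - N)
    · exact hm3 (i - n)
  have hz0 : 0 < z₀ := by simpa using (hP 0).1
  have hzpos : ∀ i, 0 < z i := by
    intro i
    rw [hzdef]
    apply mul_pos hz0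
    apply Finset.prod_pos
    intro j _
    rcases hmrρ j with h' | h' <;> rw [h'] <;> linarith
  -- z agrees with phase 1 on [0, N]
  have hz1 : ∀ i ≤ N, z i = z₀ * ∏ j ∈ Finset.range i, m1 j := by
    intro i hi
    show z₀ * ∏ j ∈ Finset.range i, m j = _
    congr 1
    apply Finset.prod_congr rfl
    intro j hj
    rw [Finset.mem_range] at hj
    simp only [hmdef]
    rw [if_pos (by omega)]
  -- z on the steering segment
  have hz2 : ∀ d ≤ K, z (N + d) = v * ∏ j ∈ Finset.range d, ms j := by
    intro d hd
    show z₀ * ∏ j ∈ Finset.range (N + d), m j = _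
    rw [Finset.prod_range_add]
    rw [← mul_assoc]
    have e1 : z₀ * ∏ j ∈ Finset.range N, m j = v := by
      rw [hvdef]
      congr 1
      apply Finset.prod_congr rfl
      intro j hj
      rw [Finset.mem_range] at hj
      simp only [hmdef]
      rw [if_pos hj]
    rw [e1]
    congr 1
    apply Finset.prod_congr rfl
    intro j hj
    rw [Finset.mem_range] at hj
    simp only [hmdef]
    rw [if_neg (by omega), if_pos (by omega)]
    congr 1
    omega
  have hzn : z n = vr := by
    rw [hndef, hz2 K le_rfl, hms3, hvrdef]
  -- z after the steering segment
  have hz3 : ∀ d, z (n + d) = vr * ∏ j ∈ Finset.range d, m3 j := by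
    intro d
    show z₀ * ∏ j ∈ Finset.range (n + d), m j = _
    rw [Finset.prod_range_add, ← mul_assoc]
    have e1 : z₀ * ∏ j ∈ Finset.range n, m j = vr := hzn
    rw [e1]
    congr 1
    apply Finset.prod_congr rfl
    intro j hj
    simp only [hmdef]
    rw [if_neg (by omega), if_neg (by omega)]
    congr 1
    omega
  have hkey' := hkey vr hvr_gt.le hvr_lt.le
  have hzle1 : ∀ i, z i ≤ 1 := by
    intro i
    rcases le_or_gt i N with hiN | hiN
    · rw [hz1 i hiN]; exact (hP i).2.1
    · rcases le_or_gt i n with hin | hin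
      · obtain ⟨d, rfl⟩ : ∃ d, i = N + d := ⟨i - N, by omega⟩
        rw [hz2 d (by omega)]
        exact hms2 d (by omega)
      · obtain ⟨d, rfl⟩ : ∃ d, i = n + d := ⟨i - n, by omega⟩
        rw [hz3 d]
        exact (hkey' d).2.1
  have hzM : z ∈ Mset r ρ := by
    constructor
    · intro i
      exact ⟨(hzpos i).le, hzle1 i⟩
    · intro i
      have hstep : z (i+1) = m i * z i := by
        show z₀ * ∏ j ∈ Finset.range (i+1), m j = _
        rw [Finset.prod_range_succ]
        show _ = m i * (z₀ * ∏ j ∈ Finset.range i, m j)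
        ring
      rcases hmrρ i with h' | h'
      · left; rw [hstep, h']
      · right; rw [hstep, h']
  refine ⟨z, n, hzM, ?_, ?_⟩
  · intro i hi
    rw [hz1 i hi]
    calc |z₀ * ∏ j ∈ Finset.range i, m1 j - xf i| ≤ δ := (hP i).2.2
      _ < ε := hδε
  · intro i
    rw [Nat.add_comm i n, hz3 i]
    calc |vr * ∏ j ∈ Finset.range i, m3 j - yf i| ≤ δ := (hkey' i).2.2
      _ < ε := hδε


end main

lemma shift_iter (r ρ : ℝ) : ∀ (n : ℕ) (w : Mset r ρ) (i : ℕ),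
    (((shiftM r ρ)^[n]) w).1 i = w.1 (i + n) := by
  intro n
  induction n with
  | zero => intro w i; rfl
  | succ n ih =>
    intro w i
    rw [Function.iterate_succ_apply]
    rw [ih (shiftM r ρ w) i]
    rfl

/-- The shift map on the Lelek fan `M_{r,ρ}` is topologically transitive. -/
theorem stmt0 (r ρ : ℝ) (h : NC r ρ) :
    ∀ U V : Set (Mset r ρ), IsOpen U → IsOpen V → U.Nonempty → V.Nonempty →
      ∃ n : ℕ, ((shiftM r ρ)^[n] '' U ∩ V).Nonempty := by
  intro U V hU hV ⟨x, hxU⟩ ⟨y, hyV⟩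
  obtain ⟨WU, hWUopen, hWU⟩ := isOpen_induced_iff.mp hU
  obtain ⟨WV, hWVopen, hWV⟩ := isOpen_induced_iff.mp hV
  have hxW : x.1 ∈ WU := by rw [← hWU] at hxU; exact hxU
  have hyW : y.1 ∈ WV := by rw [← hWV] at hyV; exact hyV
  obtain ⟨N₁, ε₁, hε₁, hcyl₁⟩ := cylinder hWUopen hxW
  obtain ⟨N₂, ε₂, hε₂, hcyl₂⟩ := cylinder hWVopen hyW
  set N : ℕ := max N₁ N₂ with hN
  set ε : ℝ := min ε₁ ε₂ with hε
  have hε0 : 0 < ε := lt_min hε₁ hε₂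
  obtain ⟨z, n, hzM, hzx, hzy⟩ := approx h x.1 y.1 x.2 y.2 N ε hε0
  refine ⟨n, ⟨(shiftM r ρ)^[n] ⟨z, hzM⟩, ⟨⟨z, hzM⟩, ?_, rfl⟩, ?_⟩⟩
  · -- ⟨z, hzM⟩ ∈ U
    rw [← hWU]
    exact hcyl₁ z (fun i hi =>
      lt_of_lt_of_le (hzx i (le_trans hi (le_max_left _ _))) (min_le_left _ _))
  · -- shifted point ∈ V
    rw [← hWV]
    apply hcyl₂
    intro i hi
    rw [shift_iter r ρ n ⟨z, hzM⟩ i]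
    exact lt_of_lt_of_le (hzy i) (min_le_right _ _)
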